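/- Let G be a connected simple graph on n ≥ 3 vertices with Randić index R, algebraic connectivity a, and edge connectivity κ'. If κ' ≥ 2, then R/a < ((n - 3 + 2√2)/2) / (2(1 - cos(π/n))), i.e., the inequality R/a ≤ ((n-3+2√2)/2)/(2(1-cos(π/n))) holds strictly. -/

import Mathlib

open Finset Real Matrix

/-- The Randić index of a finite simple graph:
`R(G) = ∑_{uv ∈ E(G)} 1/√(d(u)·d(v))`. -/
noncomputable def randicIndex {V : Type*} [Fintype V] (G : SimpleGraph V) : ℝ :=
  letI : DecidableRel G.Adj := Classical.decRel _
  ∑ e ∈ G.edgeFinset,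
    Sym2.lift ⟨fun u v => 1 / Real.sqrt ((G.degree u : ℝ) * (G.degree v : ℝ)),
      fun u v => by simp [mul_comm]⟩ e

/-- The algebraic connectivity of a graph on `Fin n`: the second smallest eigenvalue
of the Laplacian matrix, characterized (via Courant–Fischer, since the all-ones vector
is an eigenvector of the smallest eigenvalue `0`) as the infimum of the Rayleigh
quotient over nonzero vectors orthogonal to the all-ones vector. -/
noncomputable def algebraicConnectivity {n : ℕ} (G : SimpleGraph (Fin n)) : ℝ :=
  letI : DecidableRel G.Adj := Classical.decRel _
  sInf {r : ℝ | ∃ x : Fin n → ℝ, x ≠ 0 ∧ (∑ i, x i) = 0 ∧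
    r = (x ⬝ᵥ ((G.lapMatrix ℝ).mulVec x)) / (x ⬝ᵥ x)}

/-- The edge connectivity of a graph: the least number of edges whose deletion
disconnects the graph. -/
noncomputable def edgeConnectivity {V : Type*} [Fintype V] (G : SimpleGraph V) : ℕ :=
  sInf {k : ℕ | ∃ s : Set (Sym2 V), s ⊆ G.edgeSet ∧ s.ncard = k ∧
    ¬ (G.deleteEdges s).Connected}

/-- The star `K_{1,n-1}` on vertex set `Fin n`: vertex `0` is adjacent to all others. -/
def starGraph (n : ℕ) : SimpleGraph (Fin n) where
  Adj i j := i ≠ j ∧ ((i : ℕ) = 0 ∨ (j : ℕ) = 0)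
  symm := ⟨fun _ _ h => ⟨h.1.symm, h.2.symm⟩⟩
  loopless := ⟨fun _ h => h.1 rfl⟩

lemma gauss_real (m : ℕ) : ∑ j ∈ range m, ((j : ℝ) + 1) = m * (m + 1) / 2 := by
  induction m with
  | zero => simp
  | succ m ih => rw [Finset.sum_range_succ, ih]; push_cast; ring

lemma cube_sum_real (m : ℕ) :
    ∑ j ∈ range m, ((j : ℝ) + 1) * ((m : ℝ) - (j : ℝ)) = m * (m + 1) * (m + 2) / 6 := by
  induction m with
  | zero => simp
  | succ m ih =>
    have h1 : ∑ j ∈ range (m + 1), ((j : ℝ) + 1) * (((m : ℝ) + 1) - (j : ℝ))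
        = ∑ j ∈ range (m + 1), (((j : ℝ) + 1) * ((m : ℝ) - (j : ℝ)) + ((j : ℝ) + 1)) := by
      exact Finset.sum_congr rfl fun j _ => by ring
    push_cast
    rw [h1, Finset.sum_add_distrib, Finset.sum_range_succ, ih, gauss_real]
    push_cast
    ring

lemma abel_identity (z : ℕ → ℝ) (m : ℕ) :
    ∑ j ∈ range m, (∑ k ∈ range (j + 1), z k) * (z (j + 1) - z j)
      = (∑ k ∈ range (m + 1), z k) * z m - ∑ k ∈ range (m + 1), (z k) ^ 2 := by
  induction m with
  | zero => simp; ring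
  | succ m ih =>
    rw [Finset.sum_range_succ, ih]
    rw [Finset.sum_range_succ (fun k => z k) (m + 1), Finset.sum_range_succ (fun k => (z k) ^ 2) (m + 1)]
    ring

lemma telescope_Ico (z : ℕ → ℝ) {a b : ℕ} (hab : a ≤ b) :
    ∑ k ∈ Finset.Ico a b, (z (k + 1) - z k) = z b - z a := by
  have h := Finset.sum_Ico_consecutive (fun k => z (k + 1) - z k) (Nat.zero_le a) hab
  have h1 : ∑ k ∈ Finset.Ico 0 a, (z (k + 1) - z k) = z a - z 0 := by
    rw [← Finset.range_eq_Ico]; exact Finset.sum_range_sub z a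
  have h2 : ∑ k ∈ Finset.Ico 0 b, (z (k + 1) - z k) = z b - z 0 := by
    rw [← Finset.range_eq_Ico]; exact Finset.sum_range_sub z b
  linarith [h, h1, h2]

lemma partial_sum_sq_bound (n : ℕ) (z : ℕ → ℝ) (hz : ∑ k ∈ range n, z k = 0)
    (j : ℕ) (hj : j + 1 ≤ n) :
    (∑ k ∈ range (j + 1), z k) ^ 2
      ≤ ((j : ℝ) + 1) * ((n : ℝ) - ((j : ℝ) + 1)) / n * ∑ k ∈ range n, (z k) ^ 2 := by
  have hn : 0 < n := by omega
  have hnR : (0 : ℝ) < n := by exact_mod_cast hn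
  set p : ℝ := (j : ℝ) + 1 with hp
  set w : ℕ → ℝ := fun k => (if k ≤ j then 1 else 0) - p / n with hw
  have h1 : ∑ k ∈ range n, w k * z k = ∑ k ∈ range (j + 1), z k := by
    have : ∀ k, w k * z k = (if k ≤ j then z k else 0) - (p / n) * z k := by
      intro k; by_cases h : k ≤ j <;> simp [hw, h] <;> ring
    rw [Finset.sum_congr rfl fun k _ => this k, Finset.sum_sub_distrib, ← Finset.mul_sum, hz,
      mul_zero, sub_zero, ← Finset.sum_filter]
    congr 1
    ext k
    simp only [Finset.mem_filter, Finset.mem_range]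
    omega
  have h2 : ∑ k ∈ range n, (w k) ^ 2 = p * ((n : ℝ) - p) / n := by
    have hsplit := Finset.sum_Ico_consecutive (fun k => (w k) ^ 2) (Nat.zero_le (j + 1)) hj
    rw [← Finset.range_eq_Ico] at hsplit
    have ha : ∑ k ∈ range (j + 1), (w k) ^ 2 = ((j : ℝ) + 1) * (1 - p / n) ^ 2 := by
      have hc : ∀ k ∈ range (j + 1), (w k) ^ 2 = (1 - p / n) ^ 2 := by
        intro k hk
        rw [Finset.mem_range] at hk
        have : k ≤ j := by omega
        simp [hw, this]
      rw [Finset.sum_congr rfl hc, Finset.sum_const, Finset.card_range, nsmul_eq_mul]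
      push_cast
      ring
    have hb : ∑ k ∈ Finset.Ico (j + 1) n, (w k) ^ 2 = ((n : ℝ) - ((j : ℝ) + 1)) * (p / n) ^ 2 := by
      have hc : ∀ k ∈ Finset.Ico (j + 1) n, (w k) ^ 2 = (p / n) ^ 2 := by
        intro k hk
        rw [Finset.mem_Ico] at hk
        have : ¬ k ≤ j := by omega
        simp [hw, this]
      rw [Finset.sum_congr rfl hc, Finset.sum_const, Nat.card_Ico, nsmul_eq_mul]
      have hcast : ((n - (j + 1) : ℕ) : ℝ) = (n : ℝ) - ((j : ℝ) + 1) := by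
        push_cast [Nat.cast_sub hj]; ring
      rw [hcast]
    have hsum : ∑ k ∈ range n, (w k) ^ 2
        = ((j : ℝ) + 1) * (1 - p / n) ^ 2 + ((n : ℝ) - ((j : ℝ) + 1)) * (p / n) ^ 2 := by
      rw [Finset.range_eq_Ico, ← hsplit, ha, hb]
    rw [hsum, hp]
    field_simp
    ring
  have hcs := Finset.sum_mul_sq_le_sq_mul_sq (range n) w z
  rw [h1] at hcs
  rw [h2] at hcs
  calc (∑ k ∈ range (j + 1), z k) ^ 2 ≤ p * ((n : ℝ) - p) / n * ∑ k ∈ range n, (z k) ^ 2 := hcs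
    _ = ((j : ℝ) + 1) * ((n : ℝ) - ((j : ℝ) + 1)) / n * ∑ k ∈ range n, (z k) ^ 2 := by rw [hp]

lemma seq_bound (n : ℕ) (hn : 1 ≤ n) (z : ℕ → ℝ) (hz : ∑ k ∈ range n, z k = 0) :
    ∑ k ∈ range n, (z k) ^ 2
      ≤ (((n : ℝ) ^ 2 - 1) / 6) * ∑ j ∈ range (n - 1), (z (j + 1) - z j) ^ 2 := by
  have hnR : (1 : ℝ) ≤ n := by exact_mod_cast hn
  set S2 := ∑ k ∈ range n, (z k) ^ 2 with hS2
  set Sg := ∑ j ∈ range (n - 1), (z (j + 1) - z j) ^ 2 with hSg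
  have hS2nn : 0 ≤ S2 := Finset.sum_nonneg fun k _ => sq_nonneg _
  have hSgnn : 0 ≤ Sg := Finset.sum_nonneg fun k _ => sq_nonneg _
  rcases eq_or_lt_of_le hS2nn with h0 | hpos
  · rw [← h0]
    exact mul_nonneg (by nlinarith) hSgnn
  -- Abel : ∑_{j<n-1} T j * g j = -S2
  have habel : ∑ j ∈ range (n - 1), (∑ k ∈ range (j + 1), z k) * (z (j + 1) - z j) = -S2 := by
    have h := abel_identity z (n - 1)
    have hm : n - 1 + 1 = n := by omega
    rw [hm] at h
    rw [h, hz, zero_mul, zero_sub, hS2]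
  -- Sum of T² bound
  have hTsum : ∑ j ∈ range (n - 1), (∑ k ∈ range (j + 1), z k) ^ 2 ≤ ((n : ℝ) ^ 2 - 1) / 6 * S2 := by
    calc ∑ j ∈ range (n - 1), (∑ k ∈ range (j + 1), z k) ^ 2
        ≤ ∑ j ∈ range (n - 1), ((j : ℝ) + 1) * ((n : ℝ) - ((j : ℝ) + 1)) / n * S2 := by
          refine Finset.sum_le_sum fun j hj => ?_
          rw [Finset.mem_range] at hj
          exact partial_sum_sq_bound n z hz j (by omega)
      _ = (∑ j ∈ range (n - 1), ((j : ℝ) + 1) * (((n : ℝ) - 1) - (j : ℝ))) / n * S2 := by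
          rw [Finset.sum_div, Finset.sum_mul]
          exact Finset.sum_congr rfl fun j _ => by ring_nf
      _ = ((n : ℝ) ^ 2 - 1) / 6 * S2 := by
          have hc := cube_sum_real (n - 1)
          have hcast : ((n - 1 : ℕ) : ℝ) = (n : ℝ) - 1 := by
            push_cast [Nat.cast_sub hn]; ring
          rw [hcast] at hc
          rw [hc]
          have hn0 : (n : ℝ) ≠ 0 := by linarith
          field_simp
          ring
  -- Cauchy–Schwarz
  have hcs := Finset.sum_mul_sq_le_sq_mul_sq (range (n - 1))
      (fun j => ∑ k ∈ range (j + 1), z k) (fun j => z (j + 1) - z j)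
  rw [habel] at hcs
  have h1 : S2 ^ 2 ≤ (((n : ℝ) ^ 2 - 1) / 6 * S2) * Sg := by
    calc S2 ^ 2 = (-S2) ^ 2 := by ring
      _ ≤ (∑ j ∈ range (n - 1), (∑ k ∈ range (j + 1), z k) ^ 2) * Sg := hcs
      _ ≤ (((n : ℝ) ^ 2 - 1) / 6 * S2) * Sg := by
          apply mul_le_mul_of_nonneg_right hTsum hSgnn
  nlinarith [hpos]

lemma cut_card {n : ℕ} (G : SimpleGraph (Fin n))
    (hκ : 2 ≤ edgeConnectivity G) (A : Fin n → Prop)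
    (hA : ∃ v, A v) (hA' : ∃ v, ¬ A v) (Q : Finset (Fin n × Fin n))
    (hQ : ∀ p : Fin n × Fin n, p ∈ Q ↔
      (G.Adj p.1 p.2 ∧ ((A p.1 ∧ ¬ A p.2) ∨ (A p.2 ∧ ¬ A p.1)))) :
    4 ≤ Q.card := by
  classical
  set s : Set (Sym2 (Fin n)) := {e | ∃ a b, G.Adj a b ∧ A a ∧ ¬ A b ∧ e = s(a, b)} with hs
  have hsub : s ⊆ G.edgeSet := by
    rintro e ⟨a, b, hadj, -, -, rfl⟩
    exact hadj
  have hdisc : ¬ (G.deleteEdges s).Connected := by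
    intro hc
    obtain ⟨u, hu⟩ := hA
    obtain ⟨v, hv⟩ := hA'
    obtain ⟨p⟩ := hc.preconnected u v
    have claim : ∀ (a b : Fin n), (G.deleteEdges s).Walk a b → A a → A b := by
      intro a b w
      induction w with
      | nil => exact id
      | @cons a c b h q ih =>
        intro ha
        rw [SimpleGraph.deleteEdges_adj] at h
        by_cases hc2 : A c
        · exact ih hc2
        · exact absurd (⟨a, c, h.1, ha, hc2, rfl⟩ : s(a,c) ∈ s) h.2
    exact hv (claim u v p hu)
  have hmem : s.ncard ∈ {k : ℕ | ∃ s : Set (Sym2 (Fin n)), s ⊆ G.edgeSet ∧ s.ncard = k ∧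
      ¬ (G.deleteEdges s).Connected} := ⟨s, hsub, rfl, hdisc⟩
  have h2 : 2 ≤ s.ncard := le_trans hκ (Nat.sInf_le hmem)
  obtain ⟨e₁, e₂, he₁, he₂, hne⟩ := (Set.one_lt_ncard_iff (Set.toFinite s)).mp (by omega)
  obtain ⟨a₁, b₁, hadj₁, ha₁, hb₁, rfl⟩ := he₁
  obtain ⟨a₂, b₂, hadj₂, ha₂, hb₂, rfl⟩ := he₂
  have hmem1 : (a₁, b₁) ∈ Q := (hQ _).mpr ⟨hadj₁, Or.inl ⟨ha₁, hb₁⟩⟩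
  have hmem2 : (b₁, a₁) ∈ Q := (hQ _).mpr ⟨hadj₁.symm, Or.inr ⟨ha₁, hb₁⟩⟩
  have hmem3 : (a₂, b₂) ∈ Q := (hQ _).mpr ⟨hadj₂, Or.inl ⟨ha₂, hb₂⟩⟩
  have hmem4 : (b₂, a₂) ∈ Q := (hQ _).mpr ⟨hadj₂.symm, Or.inr ⟨ha₂, hb₂⟩⟩
  have hsub4 : ({(a₁, b₁), (b₁, a₁), (a₂, b₂), (b₂, a₂)} : Finset (Fin n × Fin n)) ⊆ Q := by
    intro p hp
    simp only [Finset.mem_insert, Finset.mem_singleton] at hp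
    rcases hp with rfl | rfl | rfl | rfl
    · exact hmem1
    · exact hmem2
    · exact hmem3
    · exact hmem4
  have hcard : ({(a₁, b₁), (b₁, a₁), (a₂, b₂), (b₂, a₂)} : Finset (Fin n × Fin n)).card = 4 := by
    have d12 : (a₁, b₁) ≠ (b₁, a₁) := by
      intro h; simp only [Prod.mk.injEq] at h; exact hb₁ (h.1 ▸ ha₁)
    have d13 : (a₁, b₁) ≠ (a₂, b₂) := by
      intro h; simp only [Prod.mk.injEq] at h; exact hne (by rw [h.1, h.2])
    have d14 : (a₁, b₁) ≠ (b₂, a₂) := by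
      intro h; simp only [Prod.mk.injEq] at h; exact hb₂ (h.1 ▸ ha₁)
    have d23 : (b₁, a₁) ≠ (a₂, b₂) := by
      intro h; simp only [Prod.mk.injEq] at h; exact hb₁ (h.1.symm ▸ ha₂)
    have d24 : (b₁, a₁) ≠ (b₂, a₂) := by
      intro h; simp only [Prod.mk.injEq] at h; exact hne (by rw [h.1, h.2])
    have d34 : (a₂, b₂) ≠ (b₂, a₂) := by
      intro h; simp only [Prod.mk.injEq] at h; exact hb₂ (h.1 ▸ ha₂)
    rw [Finset.card_insert_of_notMem (by simp [d12, d13, d14]),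
      Finset.card_insert_of_notMem (by simp [d23, d24]),
      Finset.card_insert_of_notMem (by simp [d34]), Finset.card_singleton]
  calc 4 = ({(a₁, b₁), (b₁, a₁), (a₂, b₂), (b₂, a₂)} : Finset (Fin n × Fin n)).card := hcard.symm
    _ ≤ Q.card := Finset.card_le_card hsub4

lemma key {n : ℕ} (hn : 3 ≤ n) (G : SimpleGraph (Fin n)) [DecidableRel G.Adj]
    (hκ : 2 ≤ edgeConnectivity G) (x : Fin n → ℝ) (hx : ∑ i, x i = 0) :
    24 / ((n : ℝ) ^ 2 - 1) * ∑ i, (x i) ^ 2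
      ≤ ∑ i, ∑ j, (if G.Adj i j then (x i - x j) ^ 2 else 0) := by
  have hn1 : 1 ≤ n := by omega
  set σ := Tuple.sort x with hσ
  set z : ℕ → ℝ := fun k => x (σ (⟨min k (n - 1), by omega⟩ : Fin n)) with hzdef
  have hz_of_lt : ∀ k (hk : k < n), z k = x (σ ⟨k, hk⟩) := by
    intro k hk
    simp only [hzdef]
    congr 2
    exact Fin.ext (by simp; omega)
  have hzmono : Monotone z := by
    intro k l hkl
    exact Tuple.monotone_sort x (show (⟨min k (n-1), by omega⟩ : Fin n) ≤ ⟨min l (n-1), by omega⟩ by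
      simp [Fin.le_def]; omega)
  set rank : Fin n → ℕ := fun v => ((σ.symm v : Fin n) : ℕ) with hrankdef
  have hrank_lt : ∀ v, rank v < n := fun v => (σ.symm v).isLt
  have hz_rank : ∀ v, z (rank v) = x v := by
    intro v
    rw [hz_of_lt _ (hrank_lt v)]
    congr 1
    rw [show (⟨rank v, hrank_lt v⟩ : Fin n) = σ.symm v from Fin.ext rfl]
    exact σ.apply_symm_apply v
  have hrank_inj : ∀ u v, rank u = rank v → u = v := by
    intro u v h
    have : σ.symm u = σ.symm v := Fin.ext h
    exact σ.symm.injective this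
  -- sums transfer
  have hsum_z : ∑ k ∈ range n, z k = 0 := by
    rw [← Fin.sum_univ_eq_sum_range z n]
    rw [show ∑ i : Fin n, z i = ∑ i : Fin n, x (σ i) from
      Finset.sum_congr rfl fun i _ => by rw [hz_of_lt i i.isLt]]
    rw [Equiv.sum_comp σ x]
    exact hx
  have hsum_z2 : ∑ k ∈ range n, (z k) ^ 2 = ∑ i, (x i) ^ 2 := by
    rw [← Fin.sum_univ_eq_sum_range (fun k => (z k) ^ 2) n]
    rw [show ∑ i : Fin n, (z i) ^ 2 = ∑ i : Fin n, (x (σ i)) ^ 2 from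
      Finset.sum_congr rfl fun i _ => by rw [hz_of_lt i i.isLt]]
    exact Equiv.sum_comp σ (fun v => (x v) ^ 2)
  set g : ℕ → ℝ := fun j => z (j + 1) - z j with hgdef
  have hg_nonneg : ∀ j, 0 ≤ g j := fun j => sub_nonneg.mpr (hzmono (Nat.le_succ j))
  set P := ((univ ×ˢ univ : Finset (Fin n × Fin n)).filter (fun p => G.Adj p.1 p.2)) with hP
  have step1 : ∑ i, ∑ j, (if G.Adj i j then (x i - x j) ^ 2 else 0)
      = ∑ p ∈ P, (x p.1 - x p.2) ^ 2 := by
    rw [hP, Finset.sum_filter, Finset.sum_product]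
  -- per-pair inequality
  have hcase : ∀ (u v : Fin n), G.Adj u v → rank u < rank v →
      ∑ k ∈ range (n - 1), (if ((rank u ≤ k ∧ ¬ rank v ≤ k) ∨ (rank v ≤ k ∧ ¬ rank u ≤ k))
        then (g k) ^ 2 else 0) ≤ (x u - x v) ^ 2 := by
    intro u v hadj huv
    have hbn : rank v < n := hrank_lt v
    have hfilter : (range (n - 1)).filter
        (fun k => (rank u ≤ k ∧ ¬ rank v ≤ k) ∨ (rank v ≤ k ∧ ¬ rank u ≤ k))
        = Finset.Ico (rank u) (rank v) := by
      ext k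
      simp only [Finset.mem_filter, Finset.mem_range, Finset.mem_Ico]
      omega
    rw [← Finset.sum_filter, hfilter]
    calc ∑ k ∈ Finset.Ico (rank u) (rank v), (g k) ^ 2
        ≤ (∑ k ∈ Finset.Ico (rank u) (rank v), g k) ^ 2 :=
          Finset.sum_sq_le_sq_sum_of_nonneg fun k _ => hg_nonneg k
      _ = (z (rank v) - z (rank u)) ^ 2 := by rw [hgdef, telescope_Ico z huv.le]
      _ = (x u - x v) ^ 2 := by rw [hz_rank, hz_rank]; ring
  have step2 : ∀ p ∈ P, ∑ k ∈ range (n - 1),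
      (if ((rank p.1 ≤ k ∧ ¬ rank p.2 ≤ k) ∨ (rank p.2 ≤ k ∧ ¬ rank p.1 ≤ k))
        then (g k) ^ 2 else 0) ≤ (x p.1 - x p.2) ^ 2 := by
    intro p hp
    have hadj : G.Adj p.1 p.2 := (Finset.mem_filter.1 hp).2
    have hne : rank p.1 ≠ rank p.2 := fun h => hadj.ne (hrank_inj _ _ h)
    rcases hne.lt_or_gt with h | h
    · exact hcase p.1 p.2 hadj h
    · have := hcase p.2 p.1 hadj.symm h
      calc ∑ k ∈ range (n - 1), (if ((rank p.1 ≤ k ∧ ¬ rank p.2 ≤ k) ∨ (rank p.2 ≤ k ∧ ¬ rank p.1 ≤ k))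
            then (g k) ^ 2 else 0)
          = ∑ k ∈ range (n - 1), (if ((rank p.2 ≤ k ∧ ¬ rank p.1 ≤ k) ∨ (rank p.1 ≤ k ∧ ¬ rank p.2 ≤ k))
            then (g k) ^ 2 else 0) := by
            refine Finset.sum_congr rfl fun k _ => ?_
            exact if_congr or_comm rfl rfl
        _ ≤ (x p.2 - x p.1) ^ 2 := this
        _ = (x p.1 - x p.2) ^ 2 := by ring
  -- cut counting
  have step3 : ∀ k ∈ range (n - 1), 4 * (g k) ^ 2 ≤ ∑ p ∈ P,
      (if ((rank p.1 ≤ k ∧ ¬ rank p.2 ≤ k) ∨ (rank p.2 ≤ k ∧ ¬ rank p.1 ≤ k))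
        then (g k) ^ 2 else 0) := by
    intro k hk
    rw [Finset.mem_range] at hk
    rw [← Finset.sum_filter]
    set Q := P.filter (fun p => (rank p.1 ≤ k ∧ ¬ rank p.2 ≤ k) ∨ (rank p.2 ≤ k ∧ ¬ rank p.1 ≤ k))
      with hQdef
    have hQ : ∀ p : Fin n × Fin n, p ∈ Q ↔
        (G.Adj p.1 p.2 ∧ (((fun v => rank v ≤ k) p.1 ∧ ¬ (fun v => rank v ≤ k) p.2)
          ∨ ((fun v => rank v ≤ k) p.2 ∧ ¬ (fun v => rank v ≤ k) p.1))) := by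
      intro p
      simp only [hQdef, hP, Finset.mem_filter, Finset.mem_product, Finset.mem_univ, true_and]
    have hA : ∃ v, (fun v => rank v ≤ k) v := by
      refine ⟨σ ⟨0, by omega⟩, ?_⟩
      simp only [hrankdef]
      rw [Equiv.symm_apply_apply]
      simp only [Fin.val_mk]
      omega
    have hA' : ∃ v, ¬ (fun v => rank v ≤ k) v := by
      refine ⟨σ ⟨n - 1, by omega⟩, ?_⟩
      simp only [hrankdef]
      rw [Equiv.symm_apply_apply]
      simp only [Fin.val_mk]
      omega
    have hcard := cut_card G hκ (fun v => rank v ≤ k) hA hA' Q hQ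
    rw [Finset.sum_const]
    have : (4 : ℝ) * (g k) ^ 2 ≤ (Q.card : ℝ) * (g k) ^ 2 := by
      apply mul_le_mul_of_nonneg_right _ (sq_nonneg _)
      exact_mod_cast hcard
    simpa [nsmul_eq_mul] using this
  -- combine
  have hdouble : 4 * ∑ j ∈ range (n - 1), (g j) ^ 2
      ≤ ∑ i, ∑ j, (if G.Adj i j then (x i - x j) ^ 2 else 0) := by
    rw [step1]
    calc 4 * ∑ j ∈ range (n - 1), (g j) ^ 2 = ∑ j ∈ range (n - 1), 4 * (g j) ^ 2 := by
          rw [Finset.mul_sum]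
      _ ≤ ∑ k ∈ range (n - 1), ∑ p ∈ P,
          (if ((rank p.1 ≤ k ∧ ¬ rank p.2 ≤ k) ∨ (rank p.2 ≤ k ∧ ¬ rank p.1 ≤ k))
            then (g k) ^ 2 else 0) := Finset.sum_le_sum step3
      _ = ∑ p ∈ P, ∑ k ∈ range (n - 1),
          (if ((rank p.1 ≤ k ∧ ¬ rank p.2 ≤ k) ∨ (rank p.2 ≤ k ∧ ¬ rank p.1 ≤ k))
            then (g k) ^ 2 else 0) := Finset.sum_comm
      _ ≤ ∑ p ∈ P, (x p.1 - x p.2) ^ 2 := Finset.sum_le_sum step2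
  have hseq := seq_bound n hn1 z hsum_z
  rw [hsum_z2] at hseq
  have hnpos : (0 : ℝ) < (n : ℝ) ^ 2 - 1 := by
    have : (3 : ℝ) ≤ n := by exact_mod_cast hn
    nlinarith
  calc 24 / ((n : ℝ) ^ 2 - 1) * ∑ i, (x i) ^ 2
      ≤ 24 / ((n : ℝ) ^ 2 - 1) * ((((n : ℝ) ^ 2 - 1) / 6) * ∑ j ∈ range (n - 1), (g j) ^ 2) := by
        apply mul_le_mul_of_nonneg_left hseq (by positivity)
    _ = 4 * ∑ j ∈ range (n - 1), (g j) ^ 2 := by field_simp; ring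
    _ ≤ _ := hdouble

lemma double_count {n : ℕ} (G : SimpleGraph (Fin n)) [DecidableRel G.Adj] (F : Sym2 (Fin n) → ℝ) :
    ∑ i, ∑ j, (if G.Adj i j then F s(i, j) else 0) = 2 * ∑ e ∈ G.edgeFinset, F e := by
  classical
  have h1 : ∑ i, ∑ j, (if G.Adj i j then F s(i, j) else 0)
      = ∑ p ∈ (univ ×ˢ univ : Finset (Fin n × Fin n)) with G.Adj p.1 p.2, F s(p.1, p.2) := by
    rw [Finset.sum_filter, Finset.sum_product]
  rw [h1]
  have hmaps : ∀ p ∈ (univ ×ˢ univ : Finset (Fin n × Fin n)).filter (fun p => G.Adj p.1 p.2),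
      s(p.1, p.2) ∈ G.edgeFinset := by
    intro p hp
    simp only [Finset.mem_filter] at hp
    simpa [SimpleGraph.mem_edgeFinset] using hp.2
  rw [← Finset.sum_fiberwise_of_maps_to hmaps (fun p => F s(p.1, p.2))]
  rw [Finset.mul_sum]
  refine Finset.sum_congr rfl fun e he => ?_
  induction e with
  | _ a b =>
    have hab : G.Adj a b := by simpa [SimpleGraph.mem_edgeFinset] using he
    have hfib : ((univ ×ˢ univ : Finset (Fin n × Fin n)).filter (fun p => G.Adj p.1 p.2)).filter
        (fun p => s(p.1, p.2) = s(a, b)) = {(a, b), (b, a)} := by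
      ext p
      simp only [Finset.mem_filter, Finset.mem_product, Finset.mem_univ, true_and,
        Finset.mem_insert, Finset.mem_singleton, Sym2.eq_iff, Prod.ext_iff]
      constructor
      · rintro ⟨_, (⟨h1, h2⟩ | ⟨h1, h2⟩)⟩
        · left; exact ⟨h1, h2⟩
        · right; exact ⟨h1, h2⟩
      · rintro (⟨h1, h2⟩ | ⟨h1, h2⟩)
        · exact ⟨by rw [h1, h2]; exact hab, Or.inl ⟨h1, h2⟩⟩
        · exact ⟨by rw [h1, h2]; exact hab.symm, Or.inr ⟨h1, h2⟩⟩
    have hcard : (({(a, b), (b, a)} : Finset (Fin n × Fin n))).card = 2 := by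
      rw [Finset.card_insert_of_notMem (by simp [Prod.ext_iff, hab.ne]), Finset.card_singleton]
    calc ∑ p ∈ ((univ ×ˢ univ : Finset (Fin n × Fin n)).filter (fun p => G.Adj p.1 p.2)).filter
          (fun p => s(p.1, p.2) = s(a, b)), F s(p.1, p.2)
        = ∑ p ∈ ((univ ×ˢ univ : Finset (Fin n × Fin n)).filter (fun p => G.Adj p.1 p.2)).filter
          (fun p => s(p.1, p.2) = s(a, b)), F s(a, b) := by
          refine Finset.sum_congr rfl fun p hp => ?_
          rw [(Finset.mem_filter.1 hp).2]
      _ = 2 * F s(a, b) := by rw [Finset.sum_const, hfib, hcard]; simp [mul_comm]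

lemma degree_pos {n : ℕ} (G : SimpleGraph (Fin n)) [DecidableRel G.Adj] (hG : G.Connected)
    (hn : 2 ≤ n) (v : Fin n) : 0 < G.degree v := by
  rw [G.degree_pos_iff_exists_adj]
  have h2 : (⟨0, by omega⟩ : Fin n) ≠ ⟨1, by omega⟩ := by simp [Fin.ext_iff]
  have : ∃ w, w ≠ v := by
    rcases eq_or_ne v ⟨0, by omega⟩ with h | h
    · exact ⟨⟨1, by omega⟩, by rw [h]; exact h2.symm⟩
    · exact ⟨⟨0, by omega⟩, fun hc => h hc.symm⟩
  obtain ⟨w, hw⟩ := this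
  obtain ⟨p⟩ := hG.preconnected v w
  cases p with
  | nil => exact absurd rfl hw.symm
  | cons h _ => exact ⟨_, h⟩

lemma randic_le {n : ℕ} (G : SimpleGraph (Fin n)) (hG : G.Connected) (hn : 2 ≤ n) :
    randicIndex G ≤ (n : ℝ) / 2 := by
  rw [randicIndex]
  set inst : DecidableRel G.Adj := Classical.decRel _ with hinst
  set F : Sym2 (Fin n) → ℝ := Sym2.lift ⟨fun u v => 1 / Real.sqrt ((G.degree u : ℝ) * (G.degree v : ℝ)),
      fun u v => by simp [mul_comm]⟩ with hF
  have hdeg : ∀ v : Fin n, 0 < (G.degree v : ℝ) := by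
    intro v; exact_mod_cast degree_pos G hG hn v
  have key : ∑ i, ∑ j, (if G.Adj i j then F s(i, j) else 0) ≤ (n : ℝ) := by
    have hle : ∀ i j : Fin n, G.Adj i j →
        F s(i, j) ≤ 1 / (2 * (G.degree i : ℝ)) + 1 / (2 * (G.degree j : ℝ)) := by
      intro i j _
      have hdi := hdeg i
      have hdj := hdeg j
      have h1 : F s(i, j) = 1 / Real.sqrt ((G.degree i : ℝ) * (G.degree j : ℝ)) := by
        rw [hF]; simp
      rw [h1]
      have hs : Real.sqrt ((G.degree i : ℝ) * (G.degree j : ℝ)) > 0 := by positivity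
      rw [div_add_div _ _ (by positivity) (by positivity), div_le_div_iff₀ (by positivity) (by positivity)]
      have h2 : Real.sqrt ((G.degree i : ℝ) * (G.degree j : ℝ)) ^ 2
          = (G.degree i : ℝ) * (G.degree j : ℝ) := Real.sq_sqrt (by positivity)
      nlinarith [sq_nonneg (Real.sqrt ((G.degree i : ℝ) * (G.degree j : ℝ)) - ((G.degree i : ℝ) + (G.degree j:ℝ))/2),
        sq_nonneg ((G.degree i : ℝ) - (G.degree j : ℝ))]
    calc ∑ i, ∑ j, (if G.Adj i j then F s(i, j) else 0)
        ≤ ∑ i, ∑ j, (if G.Adj i j then 1 / (2 * (G.degree i : ℝ)) + 1 / (2 * (G.degree j : ℝ)) else 0) := by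
          refine Finset.sum_le_sum fun i _ => Finset.sum_le_sum fun j _ => ?_
          by_cases h : G.Adj i j
          · simpa [h] using hle i j h
          · simp [h]
      _ = ∑ i, ∑ j, ((if G.Adj i j then 1 / (2 * (G.degree i : ℝ)) else 0)
            + (if G.Adj i j then 1 / (2 * (G.degree j : ℝ)) else 0)) := by
          refine Finset.sum_congr rfl fun i _ => Finset.sum_congr rfl fun j _ => ?_
          by_cases h : G.Adj i j <;> simp [h]
      _ = ∑ i, ∑ j, (if G.Adj i j then 1 / (2 * (G.degree i : ℝ)) else 0)
            + ∑ i, ∑ j, (if G.Adj i j then 1 / (2 * (G.degree j : ℝ)) else 0) := by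
          rw [← Finset.sum_add_distrib]
          exact Finset.sum_congr rfl fun i _ => Finset.sum_add_distrib
      _ = (n : ℝ) / 2 + (n : ℝ) / 2 := by
          have hrow : ∀ i : Fin n, ∑ j, (if G.Adj i j then 1 / (2 * (G.degree i : ℝ)) else 0) = 1/2 := by
            intro i
            have h1 : ∑ j, (if G.Adj i j then 1 / (2 * (G.degree i : ℝ)) else 0)
                = (1 / (2 * (G.degree i : ℝ))) * ∑ j, (if G.Adj i j then (1:ℝ) else 0) := by
              rw [Finset.mul_sum]
              exact Finset.sum_congr rfl fun j _ => by by_cases h : G.Adj i j <;> simp [h]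
            rw [h1, ← G.degree_eq_sum_if_adj i]
            have := hdeg i
            field_simp
          congr 1
          · rw [Finset.sum_congr rfl fun i _ => hrow i, Finset.sum_const]
            simp [mul_comm]
            ring
          · rw [Finset.sum_comm]
            have : ∀ j : Fin n, ∑ i, (if G.Adj i j then 1 / (2 * (G.degree j : ℝ)) else 0) = 1/2 := by
              intro j
              rw [← hrow j]
              refine Finset.sum_congr rfl fun i _ => ?_
              have : G.Adj i j ↔ G.Adj j i := G.adj_comm i j
              by_cases h : G.Adj i j
              · simp [h, this.mp h]
              · have h2 : ¬ G.Adj j i := fun hc => h (this.mpr hc)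
                simp [h, h2]
            rw [Finset.sum_congr rfl fun j _ => this j, Finset.sum_const]
            simp [mul_comm]
            ring
      _ = (n : ℝ) := by ring
  have := double_count G F
  linarith [key, this]

lemma alg_ge {n : ℕ} (hn : 3 ≤ n) (G : SimpleGraph (Fin n))
    (hκ : 2 ≤ edgeConnectivity G) :
    12 / ((n : ℝ) ^ 2 - 1) ≤ algebraicConnectivity G := by
  rw [algebraicConnectivity]
  letI inst : DecidableRel G.Adj := Classical.decRel _
  have hnpos : (0 : ℝ) < (n : ℝ) ^ 2 - 1 := by
    have : (3 : ℝ) ≤ n := by exact_mod_cast hn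
    nlinarith
  apply le_csInf
  · -- nonempty
    have h01 : (⟨0, by omega⟩ : Fin n) ≠ ⟨1, by omega⟩ := by simp [Fin.ext_iff]
    set x₀ : Fin n → ℝ := fun i => (Pi.single (⟨0, by omega⟩ : Fin n) (1:ℝ) : Fin n → ℝ) i
        - (Pi.single (⟨1, by omega⟩ : Fin n) (1:ℝ) : Fin n → ℝ) i with hx₀
    refine ⟨_, x₀, ?_, ?_, rfl⟩
    · intro h
      have := congrFun h ⟨0, by omega⟩
      simp [hx₀, Pi.single_eq_same, Pi.single_eq_of_ne' h01.symm] at this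
    · rw [hx₀]
      rw [Finset.sum_sub_distrib]
      rw [Finset.sum_pi_single', Finset.sum_pi_single']
      simp
  · rintro r ⟨x, hxne, hxsum, rfl⟩
    have hden : (0 : ℝ) < x ⬝ᵥ x := by
      have h1 : x ⬝ᵥ x = ∑ i, (x i) ^ 2 := by
        simp [dotProduct, sq]
      rw [h1]
      obtain ⟨i, hi⟩ := Function.ne_iff.mp hxne
      apply Finset.sum_pos' (fun j _ => sq_nonneg _) ⟨i, Finset.mem_univ i, pow_two_pos_of_ne_zero hi⟩
    have hnum : x ⬝ᵥ ((G.lapMatrix ℝ).mulVec x)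
        = (∑ i, ∑ j, if G.Adj i j then (x i - x j) ^ 2 else 0) / 2 := by
      rw [← Matrix.toLinearMap₂'_apply', SimpleGraph.lapMatrix_toLinearMap₂']
    have hkey := key hn G hκ x hxsum
    rw [le_div_iff₀ hden]
    rw [hnum]
    have h1 : x ⬝ᵥ x = ∑ i, (x i) ^ 2 := by simp [dotProduct, sq]
    rw [h1]
    have h24 : 24 / ((n:ℝ)^2 - 1) = 2 * (12 / ((n:ℝ)^2 - 1)) := by ring
    rw [h24] at hkey
    linarith

lemma randic_nonneg {V : Type*} [Fintype V] (G : SimpleGraph V) : 0 ≤ randicIndex G := by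
  rw [randicIndex]
  apply Finset.sum_nonneg
  intro e _
  induction e with
  | _ u v =>
    simp only [Sym2.lift_mk]
    positivity

set_option maxHeartbeats 1000000 in
theorem randic_over_algConn_lt_of_edgeConnectivity_ge_two
    {n : ℕ} (hn : 3 ≤ n) (G : SimpleGraph (Fin n)) (hG : G.Connected)
    (hκ : 2 ≤ edgeConnectivity G) :
    randicIndex G / algebraicConnectivity G <
      (((n : ℝ) - 3 + 2 * Real.sqrt 2) / 2) / (2 * (1 - Real.cos (Real.pi / n))) := by
  have hnR : (3 : ℝ) ≤ n := by exact_mod_cast hn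
  have hnpos2 : (0 : ℝ) < (n : ℝ) := by linarith
  have hnpos : (0 : ℝ) < (n : ℝ) ^ 2 - 1 := by nlinarith
  set c : ℝ := 12 / ((n : ℝ) ^ 2 - 1) with hc_def
  have hc : 0 < c := by positivity
  have ha : c ≤ algebraicConnectivity G := alg_ge hn G hκ
  have hR0 : 0 ≤ randicIndex G := randic_nonneg G
  have hRle : randicIndex G ≤ (n : ℝ) / 2 := randic_le G hG (by omega)
  -- bounds on the cosine term
  set D : ℝ := 2 * (1 - Real.cos (Real.pi / n)) with hD_def
  have hx0 : 0 < Real.pi / n := by positivity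
  have hxpi : Real.pi / n ≤ Real.pi := by
    rw [div_le_iff₀ hnpos2]
    nlinarith [Real.pi_pos]
  have hD0 : 0 < D := by
    have hcos := Real.cos_le_one_sub_mul_cos_sq (x := Real.pi / n)
      (by rw [abs_of_pos hx0]; exact hxpi)
    have : 0 < 2 / Real.pi ^ 2 * (Real.pi / n) ^ 2 := by positivity
    rw [hD_def]
    nlinarith
  have hDn : D * (n : ℝ) ^ 2 ≤ Real.pi ^ 2 := by
    have hcos := Real.one_sub_sq_div_two_le_cos (x := Real.pi / n)
    have h1 : D ≤ (Real.pi / n) ^ 2 := by rw [hD_def]; nlinarith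
    have h2 : (Real.pi / n) ^ 2 * (n : ℝ) ^ 2 = Real.pi ^ 2 := by
      field_simp
    nlinarith [sq_nonneg ((n:ℝ))]
  -- numeric facts
  have hpi : Real.pi < 3.15 := by
    have := Real.pi_lt_d2
    linarith
  have hsqrt2 : (1.41 : ℝ) ≤ Real.sqrt 2 := by
    have h2 : Real.sqrt 2 ^ 2 = 2 := Real.sq_sqrt (by norm_num)
    nlinarith [Real.sqrt_nonneg 2]
  -- the strict numeric inequality
  have hstrict : ((n : ℝ) / 2) / c < (((n : ℝ) - 3 + 2 * Real.sqrt 2) / 2) / D := by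
    have heq : ((n : ℝ) / 2) / c = (n : ℝ) * ((n : ℝ) ^ 2 - 1) / 24 := by
      rw [hc_def]
      field_simp
      ring
    rw [heq, lt_div_iff₀ hD0]
    have h1 : ((n : ℝ) ^ 2 - 1) * (D * (n : ℝ) ^ 2) ≤ ((n : ℝ) ^ 2 - 1) * Real.pi ^ 2 :=
      mul_le_mul_of_nonneg_left hDn (le_of_lt hnpos)
    have hpi2 : Real.pi ^ 2 < 9.9225 := by nlinarith [Real.pi_pos, hpi]
    have e1 : ((n : ℝ) ^ 2 - 1) * Real.pi ^ 2 < ((n : ℝ) ^ 2 - 1) * 9.9225 :=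
      mul_lt_mul_of_pos_left hpi2 hnpos
    have e2 : 24 * 1.41 * (n : ℝ) ≤ 24 * Real.sqrt 2 * (n : ℝ) := by
      apply mul_le_mul_of_nonneg_right _ hnpos2.le
      linarith
    have e3 : (0 : ℝ) ≤ ((n : ℝ) - 3) * (n : ℝ) := mul_nonneg (by linarith) (by linarith)
    have h2 : ((n : ℝ) ^ 2 - 1) * Real.pi ^ 2 < 12 * (n : ℝ) * ((n : ℝ) - 3 + 2 * Real.sqrt 2) := by
      nlinarith [e1, e2, e3]
    have e5 : (n : ℝ) * ((n : ℝ) * ((n : ℝ) ^ 2 - 1) / 24 * D)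
        < (n : ℝ) * (((n : ℝ) - 3 + 2 * Real.sqrt 2) / 2) := by
      have e6 : (n : ℝ) * ((n : ℝ) * ((n : ℝ) ^ 2 - 1) / 24 * D)
          = ((n : ℝ) ^ 2 - 1) * (D * (n : ℝ) ^ 2) / 24 := by ring
      rw [e6]
      calc ((n : ℝ) ^ 2 - 1) * (D * (n : ℝ) ^ 2) / 24
          ≤ ((n : ℝ) ^ 2 - 1) * Real.pi ^ 2 / 24 := by linarith
        _ < 12 * (n : ℝ) * ((n : ℝ) - 3 + 2 * Real.sqrt 2) / 24 := by linarith
        _ = (n : ℝ) * (((n : ℝ) - 3 + 2 * Real.sqrt 2) / 2) := by ring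
    exact lt_of_mul_lt_mul_left e5 hnpos2.le
  have hchain1 : randicIndex G / algebraicConnectivity G ≤ randicIndex G / c :=
    div_le_div_of_nonneg_left hR0 hc ha
  have hchain2 : randicIndex G / c ≤ ((n : ℝ) / 2) / c := by gcongr
  calc randicIndex G / algebraicConnectivity G ≤ randicIndex G / c := hchain1
    _ ≤ ((n : ℝ) / 2) / c := hchain2
    _ < _ := hstrict
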